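/- The maximum value of the major index over all standard Young tableaux of shape λ ⊢ n equals C(n,2) − b(λ'), where λ' is the conjugate (transpose) partition of λ. -/

import Mathlib

/-- A standard Young tableau of shape `μ`: a filling of the cells of `μ`
by `1,…,n` (each exactly once, `n = μ.card`), strictly increasing along
rows and columns. -/
structure SYT (μ : YoungDiagram) where
  entry : ℕ × ℕ → ℕ
  mapsTo : ∀ c ∈ μ.cells, entry c ∈ Finset.Icc 1 μ.card
  injOn : ∀ c ∈ μ.cells, ∀ d ∈ μ.cells, entry c = entry d → c = d
  surjOn : ∀ v ∈ Finset.Icc 1 μ.card, ∃ c ∈ μ.cells, entry c = v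
  row_lt : ∀ {i j1 j2 : ℕ}, j1 < j2 → (i, j2) ∈ μ → entry (i, j1) < entry (i, j2)
  col_lt : ∀ {i1 i2 j : ℕ}, i1 < i2 → (i2, j) ∈ μ → entry (i1, j) < entry (i2, j)

/-- `i` is a descent of the tableau `T`: the entry `i+1` lies in a strictly
lower row than the entry `i`. -/
def SYT.des {μ : YoungDiagram} (T : SYT μ) (i : ℕ) : Prop :=
  ∃ c ∈ μ.cells, ∃ d ∈ μ.cells, T.entry c = i ∧ T.entry d = i + 1 ∧ c.1 < d.1

open scoped Classical in
/-- The major index of a standard Young tableau: the sum of its descents. -/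
noncomputable def SYT.maj {μ : YoungDiagram} (T : SYT μ) : ℕ :=
  ∑ i ∈ Finset.range μ.card, if T.des i then i else 0

/-- `bstat μ = ∑ (i-1) μ_i` (rows 1-indexed), i.e. `∑ i * μ.rowLen i` with rows 0-indexed. -/
def bstat (μ : YoungDiagram) : ℕ :=
  ∑ i ∈ Finset.range μ.card, i * μ.rowLen i

/-- The number of columns of `μ` of odd length. -/
def oddCols (μ : YoungDiagram) : ℕ :=
  ((Finset.range μ.card).filter fun j => Odd (μ.colLen j)).card

open Finset YoungDiagram

namespace MaxMaj

/-- Cells of column `j`, as a filter, have cardinality `colLen j`. -/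
lemma col_card (μ : YoungDiagram) (j : ℕ) :
    (μ.cells.filter (fun c => c.2 = j)).card = μ.colLen j := by
  classical
  have : μ.cells.filter (fun c => c.2 = j)
      = (Finset.range (μ.colLen j)).image (fun i => (i, j)) := by
    ext ⟨a, b⟩
    simp only [Finset.mem_filter, Finset.mem_image, Finset.mem_range, mem_cells]
    constructor
    · rintro ⟨hm, rfl⟩
      exact ⟨a, (mem_iff_lt_colLen).1 hm, rfl⟩
    · rintro ⟨i, hi, h⟩
      rw [Prod.mk.injEq] at h
      obtain ⟨rfl, rfl⟩ := h
      exact ⟨(mem_iff_lt_colLen).2 hi, rfl⟩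
  rw [this, Finset.card_image_of_injective _ (fun a b hab => by simpa using hab),
    Finset.card_range]

lemma rowLen_le_card (μ : YoungDiagram) (i : ℕ) : μ.rowLen i ≤ μ.card := by
  rw [μ.rowLen_eq_card]
  exact Finset.card_le_card (Finset.filter_subset _ _)

lemma snd_lt_card {μ : YoungDiagram} {c : ℕ × ℕ} (hc : c ∈ μ.cells) : c.2 < μ.card := by
  have h1 : c.2 < μ.rowLen c.1 := by
    rw [← mem_iff_lt_rowLen]
    simpa using (mem_cells _).1 hc
  exact lt_of_lt_of_le h1 (rowLen_le_card μ c.1)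

/-- Sum of the column indices of all cells. -/
def Bsum (μ : YoungDiagram) : ℕ := ∑ c ∈ μ.cells, c.2

lemma bstat_transpose_eq_Bsum (μ : YoungDiagram) : bstat μ.transpose = Bsum μ := by
  classical
  have hcard : μ.transpose.card = μ.card := by
    simp [YoungDiagram.transpose, YoungDiagram.card]
  have hrow : ∀ i, μ.transpose.rowLen i = μ.colLen i := fun i => μ.rowLen_transpose i
  rw [bstat, hcard]
  have h1 : ∀ i ∈ Finset.range μ.card, i * μ.transpose.rowLen i
      = ∑ c ∈ μ.cells.filter (fun c => c.2 = i), c.2 := by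
    intro i _
    have : ∀ c ∈ μ.cells.filter (fun c => c.2 = i), c.2 = i := by
      intro c hc; exact (Finset.mem_filter.1 hc).2
    rw [Finset.sum_congr rfl this, Finset.sum_const, col_card, hrow, smul_eq_mul, mul_comm]
  rw [Finset.sum_congr rfl h1, Bsum]
  exact Finset.sum_fiberwise_of_maps_to (fun c hc => Finset.mem_range.2 (snd_lt_card hc)) _

/-- `Nst μ j` : the number of cells of `μ` in columns `≥ j`. -/
def Nst (μ : YoungDiagram) (j : ℕ) : ℕ := (μ.cells.filter (fun c => j ≤ c.2)).card

lemma Nst_zero (μ : YoungDiagram) : Nst μ 0 = μ.card := by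
  simp [Nst, YoungDiagram.card]

lemma Nst_anti (μ : YoungDiagram) {j k : ℕ} (h : j ≤ k) : Nst μ k ≤ Nst μ j := by
  apply Finset.card_le_card
  intro c hc
  simp only [Finset.mem_filter] at hc ⊢
  exact ⟨hc.1, le_trans h hc.2⟩

lemma Nst_succ (μ : YoungDiagram) (j : ℕ) : Nst μ j = μ.colLen j + Nst μ (j + 1) := by
  classical
  have hsplit : μ.cells.filter (fun c => j ≤ c.2)
      = (μ.cells.filter (fun c => c.2 = j)) ∪ (μ.cells.filter (fun c => j + 1 ≤ c.2)) := by
    ext c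
    simp only [Finset.mem_filter, Finset.mem_union]
    by_cases hm : c ∈ μ.cells <;> simp [hm] <;> omega
  have hdisj : Disjoint (μ.cells.filter (fun c => c.2 = j))
      (μ.cells.filter (fun c => j + 1 ≤ c.2)) := by
    apply Finset.disjoint_filter_filter'
    rw [disjoint_iff_inf_le]
    intro c hc
    simp only [Pi.inf_apply, inf_Prop_eq] at hc
    omega
  rw [Nst, hsplit, Finset.card_union_of_disjoint hdisj, col_card, Nst]

lemma Nst_card (μ : YoungDiagram) : Nst μ (μ.card) = 0 := by
  rw [Nst, Finset.card_eq_zero, Finset.filter_eq_empty_iff]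
  intro c hc
  have := snd_lt_card hc
  omega

lemma Nst_le_card (μ : YoungDiagram) (j : ℕ) : Nst μ j ≤ μ.card :=
  by simpa [Nst_zero] using Nst_anti μ (Nat.zero_le j)

/-- Summing `Nst` over `1 ≤ j < card` gives the sum of column indices. -/
lemma Nst_sum_eq_Bsum (μ : YoungDiagram) :
    ∑ j ∈ Finset.Ico 1 μ.card, Nst μ j = Bsum μ := by
  classical
  have h1 : ∀ j, Nst μ j = ∑ c ∈ μ.cells, if j ≤ c.2 then 1 else 0 := by
    intro j
    rw [Nst, Finset.card_filter]
  rw [Finset.sum_congr rfl (fun j _ => h1 j), Finset.sum_comm, Bsum]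
  apply Finset.sum_congr rfl
  intro c hc
  have hlt : c.2 < μ.card := snd_lt_card hc
  have : ∀ j ∈ Finset.Ico 1 μ.card, (if j ≤ c.2 then (1:ℕ) else 0) =
      (if j ∈ Finset.Ico 1 (c.2+1) then 1 else 0) := by
    intro j hj
    simp only [Finset.mem_Ico] at hj ⊢
    by_cases h : j ≤ c.2
    · simp only [if_pos h]; rw [if_pos]; omega
    · simp only [if_neg h]; rw [if_neg]; omega
  rw [Finset.sum_congr rfl this, Finset.sum_ite_mem, Finset.sum_const]
  have h2 : Finset.Ico 1 μ.card ∩ Finset.Ico 1 (c.2+1) = Finset.Ico 1 (c.2+1) := by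
    apply Finset.inter_eq_right.2
    intro j hj
    simp only [Finset.mem_Ico] at hj ⊢
    omega
  rw [h2]
  simp

end MaxMaj
namespace MaxMaj

variable {μ : YoungDiagram}

lemma entry_le_card (T : SYT μ) {q : ℕ × ℕ} (hq : q ∈ μ.cells) : T.entry q ≤ μ.card :=
  (Finset.mem_Icc.1 (T.mapsTo q hq)).2

lemma one_le_entry (T : SYT μ) {q : ℕ × ℕ} (hq : q ∈ μ.cells) : 1 ≤ T.entry q :=
  (Finset.mem_Icc.1 (T.mapsTo q hq)).1

/-- Entries strictly increase towards the lower-right. -/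
lemma entry_lt_entry (T : SYT μ) {p q : ℕ × ℕ} (hq : q ∈ μ.cells)
    (h1 : p.1 ≤ q.1) (h2 : p.2 ≤ q.2) (hne : p ≠ q) : T.entry p < T.entry q := by
  obtain ⟨p1, p2⟩ := p
  obtain ⟨q1, q2⟩ := q
  simp only at h1 h2
  have hqμ : (q1, q2) ∈ μ := (YoungDiagram.mem_cells _).1 hq
  rcases eq_or_lt_of_le h1 with h1' | h1'
  · subst h1'
    have : p2 < q2 := by
      rcases eq_or_lt_of_le h2 with h2' | h2'
      · exact absurd (by rw [h2']) hne
      · exact h2'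
    exact T.row_lt this hqμ
  · have hm : (p1, q2) ∈ μ := μ.up_left_mem (le_of_lt h1') (le_refl _) hqμ
    have hlast : T.entry (p1, q2) < T.entry (q1, q2) := T.col_lt h1' hqμ
    rcases eq_or_lt_of_le h2 with h2' | h2'
    · rw [h2']; exact hlast
    · exact lt_trans (T.row_lt h2' hm) hlast

section Top

variable (T : SYT μ) {r c : ℕ}

lemma top_unique (hp : (r, c) ∈ μ.cells) (htop : T.entry (r, c) = μ.card)
    {q : ℕ × ℕ} (hq : q ∈ μ.cells) (h : T.entry q = μ.card) : q = (r, c) :=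
  T.injOn q hq (r, c) hp (by rw [h, htop])

lemma top_corner (hp : (r, c) ∈ μ.cells) (htop : T.entry (r, c) = μ.card)
    {q : ℕ × ℕ} (hq : q ∈ μ.cells) (h1 : r ≤ q.1) (h2 : c ≤ q.2) : q = (r, c) := by
  by_contra hne
  have := entry_lt_entry T hq (p := (r, c)) h1 h2 (fun h => hne (h ▸ rfl))
  have h2 := entry_le_card T hq
  omega

lemma colLen_top (hp : (r, c) ∈ μ.cells) (htop : T.entry (r, c) = μ.card) :
    μ.colLen c = r + 1 := by
  apply le_antisymm
  · by_contra h
    push_neg at h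
    have hm : (r + 1, c) ∈ μ := YoungDiagram.mem_iff_lt_colLen.2 h
    have := top_corner T hp htop ((YoungDiagram.mem_cells _).2 hm) (by omega) (le_refl _)
    simp at this
  · have : r < μ.colLen c := YoungDiagram.mem_iff_lt_colLen.1 ((YoungDiagram.mem_cells _).1 hp)
    omega

end Top

/-- Removing a corner cell from a Young diagram. -/
def eraseTop (μ : YoungDiagram) (r c : ℕ)
    (hcorner : ∀ q ∈ μ.cells, r ≤ q.1 → c ≤ q.2 → q = (r, c)) : YoungDiagram where
  cells := μ.cells.erase (r, c)
  isLowerSet := by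
    intro a b hba ha
    simp only [Finset.coe_erase, Set.mem_diff, Finset.mem_coe, Set.mem_singleton_iff] at ha ⊢
    refine ⟨μ.isLowerSet hba ha.1, ?_⟩
    rintro rfl
    exact ha.2 (hcorner a ha.1 hba.1 hba.2)

variable {r c : ℕ} {hcorner : ∀ q ∈ μ.cells, r ≤ q.1 → c ≤ q.2 → q = (r, c)}

lemma mem_eraseTop {q : ℕ × ℕ} :
    q ∈ (eraseTop μ r c hcorner).cells ↔ q ∈ μ.cells ∧ q ≠ (r, c) := by
  simp [eraseTop, Finset.mem_erase, and_comm]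

lemma card_eraseTop (hp : (r, c) ∈ μ.cells) :
    (eraseTop μ r c hcorner).card = μ.card - 1 := by
  simp [eraseTop, YoungDiagram.card, Finset.card_erase_of_mem hp]

lemma colLen_eraseTop_ne {t : ℕ} (ht : t ≠ c) :
    (eraseTop μ r c hcorner).colLen t = μ.colLen t := by
  have hmem : ∀ i : ℕ, (i, t) ∈ (eraseTop μ r c hcorner) ↔ (i, t) ∈ μ := by
    intro i
    rw [← YoungDiagram.mem_cells, mem_eraseTop, YoungDiagram.mem_cells]
    simp only [and_iff_left_iff_imp]
    intro _ h
    rw [Prod.mk.injEq] at h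
    exact ht h.2
  apply le_antisymm
  · by_contra h
    push_neg at h
    have := YoungDiagram.mem_iff_lt_colLen.1 ((hmem _).1 (YoungDiagram.mem_iff_lt_colLen.2 h))
    omega
  · by_contra h
    push_neg at h
    have := YoungDiagram.mem_iff_lt_colLen.1 ((hmem _).2 (YoungDiagram.mem_iff_lt_colLen.2 h))
    omega

lemma colLen_eraseTop_self (hp : (r, c) ∈ μ.cells) (hcol : μ.colLen c = r + 1) :
    (eraseTop μ r c hcorner).colLen c = r := by
  apply le_antisymm
  · by_contra h
    push_neg at h
    have hm : (r, c) ∈ (eraseTop μ r c hcorner) := YoungDiagram.mem_iff_lt_colLen.2 h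
    rw [← YoungDiagram.mem_cells, mem_eraseTop] at hm
    exact hm.2 rfl
  · rcases Nat.eq_zero_or_pos r with hr | hr
    · omega
    · have hm : (r - 1, c) ∈ (eraseTop μ r c hcorner) := by
        rw [← YoungDiagram.mem_cells, mem_eraseTop]
        constructor
        · exact (YoungDiagram.mem_cells _).2
            (μ.up_left_mem (by omega) (le_refl _) ((YoungDiagram.mem_cells _).1 hp))
        · simp only [ne_eq, Prod.mk.injEq]
          omega
      have := YoungDiagram.mem_iff_lt_colLen.1 hm
      omega

/-- The restriction of a SYT to the diagram with the top corner removed. -/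
def eraseTopSYT (T : SYT μ) (hp : (r, c) ∈ μ.cells) (htop : T.entry (r, c) = μ.card) :
    SYT (eraseTop μ r c hcorner) where
  entry := T.entry
  mapsTo := by
    intro q hq
    rw [mem_eraseTop] at hq
    have h1 := one_le_entry T hq.1
    have h2 := entry_le_card T hq.1
    have h3 : T.entry q ≠ μ.card := fun h => hq.2 (top_unique T hp htop hq.1 h)
    rw [card_eraseTop hp, Finset.mem_Icc]
    omega
  injOn := by
    intro q hq d hd h
    rw [mem_eraseTop] at hq hd
    exact T.injOn q hq.1 d hd.1 h
  surjOn := by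
    intro v hv
    rw [card_eraseTop hp, Finset.mem_Icc] at hv
    have hcard : 0 < μ.card := Finset.card_pos.2 ⟨_, hp⟩
    obtain ⟨q, hq, hqe⟩ := T.surjOn v (Finset.mem_Icc.2 ⟨hv.1, by omega⟩)
    refine ⟨q, mem_eraseTop.2 ⟨hq, ?_⟩, hqe⟩
    intro hqrc
    rw [hqrc, htop] at hqe
    omega
  row_lt := by
    intro i j1 j2 hj hm
    have : (i, j2) ∈ μ := (YoungDiagram.mem_cells _).1 (mem_eraseTop.1 ((YoungDiagram.mem_cells _).2 hm)).1
    exact T.row_lt hj this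
  col_lt := by
    intro i1 i2 j hi hm
    have : (i2, j) ∈ μ := (YoungDiagram.mem_cells _).1 (mem_eraseTop.1 ((YoungDiagram.mem_cells _).2 hm)).1
    exact T.col_lt hi this

lemma des_eraseTop_iff (T : SYT μ) (hp : (r, c) ∈ μ.cells) (htop : T.entry (r, c) = μ.card)
    {i : ℕ} (hi : i + 1 < μ.card) :
    T.des i ↔ (eraseTopSYT (hcorner := hcorner) T hp htop).des i := by
  constructor
  · rintro ⟨cc, hcc, dd, hdd, h1, h2, hlt⟩
    have hcc' : cc ≠ (r, c) := by
      intro h; rw [h, htop] at h1; omega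
    have hdd' : dd ≠ (r, c) := by
      intro h; rw [h, htop] at h2; omega
    exact ⟨cc, mem_eraseTop.2 ⟨hcc, hcc'⟩, dd, mem_eraseTop.2 ⟨hdd, hdd'⟩, h1, h2, hlt⟩
  · rintro ⟨cc, hcc, dd, hdd, h1, h2, hlt⟩
    exact ⟨cc, (mem_eraseTop.1 hcc).1, dd, (mem_eraseTop.1 hdd).1, h1, h2, hlt⟩

lemma des_top_iff (T : SYT μ) (hp : (r, c) ∈ μ.cells) (htop : T.entry (r, c) = μ.card)
    {q : ℕ × ℕ} (hq : q ∈ μ.cells) (hqe : T.entry q = μ.card - 1) (hcard : 1 ≤ μ.card) :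
    (T.des (μ.card - 1) ↔ q.1 < r) := by
  constructor
  · rintro ⟨cc, hcc, dd, hdd, h1, h2, hlt⟩
    have hcceq : cc = q := T.injOn cc hcc q hq (by rw [h1, hqe])
    have hddeq : dd = (r, c) := top_unique T hp htop hdd (by rw [h2]; omega)
    rw [hcceq, hddeq] at hlt
    exact hlt
  · intro h
    exact ⟨q, hq, (r, c), hp, hqe, by omega, h⟩

open scoped Classical in
/-- Sum of the non-descents. -/
noncomputable def ndsum (T : SYT μ) : ℕ :=
  ∑ i ∈ Finset.range μ.card, if T.des i then 0 else i

lemma maj_add_ndsum (T : SYT μ) : T.maj + ndsum T = μ.card.choose 2 := by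
  classical
  rw [SYT.maj, ndsum, ← Finset.sum_add_distrib]
  have h1 : ∀ i ∈ Finset.range μ.card,
      ((if T.des i then i else 0) + if T.des i then 0 else i) = i := by
    intro i _
    by_cases h : T.des i <;> simp [h]
  rw [Finset.sum_congr rfl h1]
  have h2 := Finset.sum_range_id_mul_two μ.card
  have h3 := Nat.choose_two_right μ.card
  omega

/-- The correction statistic `V`. -/
def Vc (μ : YoungDiagram) (c : ℕ) : ℕ := ∑ t ∈ Finset.range c, (μ.colLen t - μ.colLen c)

lemma sum_colLen_le (μ : YoungDiagram) (k : ℕ) :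
    ∑ t ∈ Finset.range k, μ.colLen t ≤ μ.card := by
  classical
  rw [Finset.sum_congr rfl (fun t (_ : t ∈ Finset.range k) => (col_card μ t).symm),
    ← Finset.card_biUnion]
  · exact Finset.card_le_card (Finset.biUnion_subset.2 fun t _ => Finset.filter_subset _ _)
  · intro x _ y _ hxy
    rw [Function.onFun, Finset.disjoint_left]
    intro a ha1 ha2
    rw [Finset.mem_filter] at ha1 ha2
    exact hxy (ha1.2 ▸ ha2.2)

end MaxMaj
namespace MaxMaj

theorem ub (n : ℕ) (μ : YoungDiagram) (T : SYT μ) (r c : ℕ)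
    (hn : μ.card = n) (hp : (r, c) ∈ μ.cells) (htop : T.entry (r, c) = μ.card) :
    Bsum μ + Vc μ c ≤ ndsum T := by
  classical
  induction n using Nat.strong_induction_on generalizing μ T r c with
  | _ n ih =>
  have hcardpos : 0 < μ.card := Finset.card_pos.2 ⟨_, hp⟩
  -- the cell (0,0) is in μ, and a few basic facts
  have hpμ : (r, c) ∈ μ := (YoungDiagram.mem_cells _).1 hp
  have hcolc : μ.colLen c = r + 1 := colLen_top T hp htop
  -- `c + Vc μ c + 1 ≤ μ.card`
  have hcv : c + Vc μ c + 1 ≤ μ.card := by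
    have hA : ∀ t ∈ Finset.range c, μ.colLen t - μ.colLen c + 1 ≤ μ.colLen t := by
      intro t ht
      have h1 : μ.colLen c ≤ μ.colLen t :=
        μ.colLen_anti t c (le_of_lt (Finset.mem_range.1 ht))
      omega
    have hB : Vc μ c + c ≤ ∑ t ∈ Finset.range c, μ.colLen t := by
      have := Finset.sum_le_sum hA
      rw [Finset.sum_add_distrib, Finset.sum_const, Finset.card_range, smul_eq_mul,
        mul_one] at this
      exact this
    have hC : ∑ t ∈ Finset.range (c + 1), μ.colLen t ≤ μ.card := sum_colLen_le μ (c + 1)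
    rw [Finset.sum_range_succ] at hC
    omega
  by_cases h1 : μ.card = 1
  · -- singleton diagram
    have h00 : ((0, 0) : ℕ × ℕ) ∈ μ.cells :=
      (YoungDiagram.mem_cells _).2 (μ.up_left_mem (Nat.zero_le _) (Nat.zero_le _) hpμ)
    obtain ⟨x, hx⟩ := Finset.card_eq_one.1 h1
    have e1 : (r, c) = x := by rw [hx] at hp; exact Finset.mem_singleton.1 hp
    have e2 : ((0, 0) : ℕ × ℕ) = x := by rw [hx] at h00; exact Finset.mem_singleton.1 h00
    have hc0 : c = 0 := by
      have := e1.trans e2.symm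
      rw [Prod.mk.injEq] at this
      exact this.2
    have hB0 : Bsum μ = 0 := by
      rw [Bsum, hx, ← e2, Finset.sum_singleton]
    rw [hB0, hc0]
    simp [Vc]
  · -- μ.card ≥ 2
    have hcard2 : 2 ≤ μ.card := by omega
    set m := μ.card - 1 with hm
    obtain ⟨q, hq, hqe⟩ := T.surjOn m (Finset.mem_Icc.2 ⟨by omega, by omega⟩)
    have hcorner : ∀ q ∈ μ.cells, r ≤ q.1 → c ≤ q.2 → q = (r, c) :=
      fun q hq h1 h2 => top_corner T hp htop hq h1 h2
    set E := eraseTop μ r c hcorner with hE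
    set T' : SYT E := eraseTopSYT (hcorner := hcorner) T hp htop with hT'
    have hcardE : E.card = m := card_eraseTop hp
    have hqne : q ≠ (r, c) := by
      intro h; rw [h, htop] at hqe; omega
    have hq' : q ∈ E.cells := mem_eraseTop.2 ⟨hq, hqne⟩
    have hqtop : T'.entry q = E.card := by rw [hcardE]; exact hqe
    have hq'' : (q.1, q.2) ∈ E.cells := by rwa [Prod.mk.eta]
    have hqtop' : T'.entry (q.1, q.2) = E.card := by rwa [Prod.mk.eta]
    have IH : Bsum E + Vc E q.2 ≤ ndsum T' :=
      ih m (by omega) E T' q.1 q.2 hcardE hq'' hqtop'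
    -- Bsum relation
    have hBsum : Bsum E + c = Bsum μ := by
      have := Finset.sum_erase_add μ.cells (fun x => x.2) hp
      exact this
    -- ndsum relation
    have hndsplit : ndsum T = ndsum T' + (if T.des m then 0 else m) := by
      rw [ndsum, show μ.card = m + 1 by omega, Finset.sum_range_succ]
      congr 1
      rw [ndsum, hcardE]
      apply Finset.sum_congr rfl
      intro i hi
      have hiff := des_eraseTop_iff (hcorner := hcorner) T hp htop
        (i := i) (by have := Finset.mem_range.1 hi; omega)
      by_cases hd : T.des i
      · rw [if_pos hd, if_pos (hiff.1 hd)]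
      · rw [if_neg hd, if_neg (fun h => hd (hiff.2 h))]
    by_cases hdes : T.des m
    · -- descent case
      have hr' : q.1 < r := (des_top_iff T hp htop hq hqe (by omega)).1 hdes
      have hc' : c ≤ q.2 := by
        by_contra hlt
        push_neg at hlt
        have hm1 : (q.1, c) ∈ μ := μ.up_left_mem (le_of_lt hr') (le_refl _) hpμ
        have hm2 : T.entry (q.1, q.2) < T.entry (q.1, c) := T.row_lt hlt hm1
        rw [Prod.mk.eta, hqe] at hm2
        have hm3 : T.entry (q.1, c) ≤ μ.card := entry_le_card T ((YoungDiagram.mem_cells _).2 hm1)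
        have hm4 : T.entry (q.1, c) = μ.card := by omega
        have := top_unique T hp htop ((YoungDiagram.mem_cells _).2 hm1) hm4
        rw [Prod.mk.injEq] at this
        omega
      have hV : Vc μ c + c ≤ Vc E q.2 := by
        rcases eq_or_lt_of_le hc' with hceq | hclt
        · -- q.2 = c
          have : Vc E c = Vc μ c + c := by
            rw [Vc]
            have hterm : ∀ t ∈ Finset.range c,
                E.colLen t - E.colLen c = (μ.colLen t - μ.colLen c) + 1 := by
              intro t ht
              have ht' : t ≠ c := by have := Finset.mem_range.1 ht; omega
              rw [colLen_eraseTop_ne ht', colLen_eraseTop_self hp hcolc]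
              have h1 : μ.colLen c ≤ μ.colLen t :=
                μ.colLen_anti t c (le_of_lt (Finset.mem_range.1 ht))
              omega
            rw [Finset.sum_congr rfl hterm, Finset.sum_add_distrib, Finset.sum_const,
              Finset.card_range, smul_eq_mul, mul_one, Vc]
          rw [← hceq]
          omega
        · -- c < q.2
          have h6 : μ.colLen q.2 ≤ r := by
            by_contra h
            push_neg at h
            have hm1 : (r, q.2) ∈ μ := YoungDiagram.mem_iff_lt_colLen.2 h
            have := hcorner (r, q.2) ((YoungDiagram.mem_cells _).2 hm1) (le_refl _) (le_of_lt hclt)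
            rw [Prod.mk.injEq] at this
            omega
          have hsub : Finset.range c ⊆ Finset.range q.2 :=
            Finset.range_subset_range.2 (le_of_lt hclt)
          have hstep1 : ∑ t ∈ Finset.range c, (E.colLen t - E.colLen q.2) ≤ Vc E q.2 :=
            Finset.sum_le_sum_of_subset hsub
          have hstep2 : ∀ t ∈ Finset.range c,
              (μ.colLen t - μ.colLen c) + 1 ≤ E.colLen t - E.colLen q.2 := by
            intro t ht
            have ht' : t ≠ c := by have := Finset.mem_range.1 ht; omega
            have hq2c : q.2 ≠ c := by omega
            rw [colLen_eraseTop_ne ht', colLen_eraseTop_ne hq2c]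
            have h7 : μ.colLen c ≤ μ.colLen t :=
              μ.colLen_anti t c (le_of_lt (Finset.mem_range.1 ht))
            omega
          have := Finset.sum_le_sum hstep2
          rw [Finset.sum_add_distrib, Finset.sum_const, Finset.card_range, smul_eq_mul,
            mul_one] at this
          rw [Vc]
          omega
      rw [hndsplit, if_pos hdes]
      omega
    · -- non-descent case
      rw [hndsplit, if_neg hdes]
      omega

end MaxMaj
namespace MaxMaj

/-- The maximal-major-index tableau: the cell `(r, x)` receives the entry
`Nst μ (rowLen r - x) + r + 1`. -/
def maxT (μ : YoungDiagram) : SYT μ where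
  entry := fun p => Nst μ (μ.rowLen p.1 - p.2) + p.1 + 1
  mapsTo := by
    intro q hq
    obtain ⟨a, b⟩ := q
    show Nst μ (μ.rowLen a - b) + a + 1 ∈ Finset.Icc 1 μ.card
    have hb : b < μ.rowLen a := YoungDiagram.mem_iff_lt_rowLen.1 ((YoungDiagram.mem_cells _).1 hq)
    have hmem : (a, μ.rowLen a - b - 1) ∈ μ := YoungDiagram.mem_iff_lt_rowLen.2 (by omega)
    have hcol : a < μ.colLen (μ.rowLen a - b - 1) := YoungDiagram.mem_iff_lt_colLen.1 hmem
    have hsucc : Nst μ (μ.rowLen a - b - 1) = μ.colLen (μ.rowLen a - b - 1) + Nst μ (μ.rowLen a - b) := by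
      have h := Nst_succ μ (μ.rowLen a - b - 1)
      rwa [show μ.rowLen a - b - 1 + 1 = μ.rowLen a - b by omega] at h
    have hle : Nst μ (μ.rowLen a - b - 1) ≤ μ.card := Nst_le_card μ _
    rw [Finset.mem_Icc]
    omega
  injOn := by
    intro p hp q hq h
    obtain ⟨a, b⟩ := p
    obtain ⟨d, e⟩ := q
    have h' : Nst μ (μ.rowLen a - b) + a + 1 = Nst μ (μ.rowLen d - e) + d + 1 := h
    have hb : b < μ.rowLen a := YoungDiagram.mem_iff_lt_rowLen.1 ((YoungDiagram.mem_cells _).1 hp)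
    have he : e < μ.rowLen d := YoungDiagram.mem_iff_lt_rowLen.1 ((YoungDiagram.mem_cells _).1 hq)
    have keyA : Nst μ (μ.rowLen a - b) + a + 1 ≤ Nst μ (μ.rowLen a - b - 1) := by
      have hmem : (a, μ.rowLen a - b - 1) ∈ μ := YoungDiagram.mem_iff_lt_rowLen.2 (by omega)
      have hcol : a < μ.colLen (μ.rowLen a - b - 1) := YoungDiagram.mem_iff_lt_colLen.1 hmem
      have hsucc := Nst_succ μ (μ.rowLen a - b - 1)
      rw [show μ.rowLen a - b - 1 + 1 = μ.rowLen a - b by omega] at hsucc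
      omega
    have keyD : Nst μ (μ.rowLen d - e) + d + 1 ≤ Nst μ (μ.rowLen d - e - 1) := by
      have hmem : (d, μ.rowLen d - e - 1) ∈ μ := YoungDiagram.mem_iff_lt_rowLen.2 (by omega)
      have hcol : d < μ.colLen (μ.rowLen d - e - 1) := YoungDiagram.mem_iff_lt_colLen.1 hmem
      have hsucc := Nst_succ μ (μ.rowLen d - e - 1)
      rw [show μ.rowLen d - e - 1 + 1 = μ.rowLen d - e by omega] at hsucc
      omega
    rcases lt_trichotomy (μ.rowLen a - b) (μ.rowLen d - e) with hlt | heq | hgt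
    · exfalso
      have h2 : Nst μ (μ.rowLen d - e - 1) ≤ Nst μ (μ.rowLen a - b) := Nst_anti μ (by omega)
      omega
    · have had : a = d := by rw [heq] at h'; omega
      have hbe : b = e := by
        subst had
        omega
      rw [Prod.mk.injEq]
      exact ⟨had, hbe⟩
    · exfalso
      have h2 : Nst μ (μ.rowLen a - b - 1) ≤ Nst μ (μ.rowLen d - e) := Nst_anti μ (by omega)
      omega
  surjOn := by
    intro v hv
    rw [Finset.mem_Icc] at hv
    have hP0 : v ≤ Nst μ 0 := by rw [Nst_zero]; exact hv.2
    have hspec : v ≤ Nst μ (Nat.findGreatest (fun j => v ≤ Nst μ j) μ.card) :=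
      Nat.findGreatest_spec (P := fun j => v ≤ Nst μ j) (Nat.zero_le _) hP0
    have hjle : Nat.findGreatest (fun j => v ≤ Nst μ j) μ.card ≤ μ.card :=
      Nat.findGreatest_le _
    set j := Nat.findGreatest (fun j => v ≤ Nst μ j) μ.card with hj
    have hjne : j ≠ μ.card := by
      intro h
      rw [h, Nst_card] at hspec
      omega
    have hnot : ¬ (v ≤ Nst μ (j + 1)) := by
      have := Nat.findGreatest_is_greatest (P := fun j => v ≤ Nst μ j) (n := μ.card)
        (k := j + 1) (by omega) (by omega)
      exact this
    push_neg at hnot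
    have hsucc : Nst μ j = μ.colLen j + Nst μ (j + 1) := Nst_succ μ j
    have hrc : v - Nst μ (j + 1) - 1 < μ.colLen j := by omega
    have hmem : (v - Nst μ (j + 1) - 1, j) ∈ μ := YoungDiagram.mem_iff_lt_colLen.2 hrc
    have hjrow : j < μ.rowLen (v - Nst μ (j + 1) - 1) := YoungDiagram.mem_iff_lt_rowLen.1 hmem
    refine ⟨(v - Nst μ (j + 1) - 1, μ.rowLen (v - Nst μ (j + 1) - 1) - (j + 1)),
      (YoungDiagram.mem_cells _).2 (YoungDiagram.mem_iff_lt_rowLen.2 (by omega)), ?_⟩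
    show Nst μ (μ.rowLen (v - Nst μ (j + 1) - 1) -
      (μ.rowLen (v - Nst μ (j + 1) - 1) - (j + 1))) + (v - Nst μ (j + 1) - 1) + 1 = v
    rw [show μ.rowLen (v - Nst μ (j + 1) - 1) -
      (μ.rowLen (v - Nst μ (j + 1) - 1) - (j + 1)) = j + 1 by omega]
    omega
  row_lt := by
    intro i j1 j2 hj hm
    show Nst μ (μ.rowLen i - j1) + i + 1 < Nst μ (μ.rowLen i - j2) + i + 1
    have hj2 : j2 < μ.rowLen i := YoungDiagram.mem_iff_lt_rowLen.1 hm
    have hmem : (i, μ.rowLen i - j1 - 1) ∈ μ := YoungDiagram.mem_iff_lt_rowLen.2 (by omega)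
    have hcol : i < μ.colLen (μ.rowLen i - j1 - 1) := YoungDiagram.mem_iff_lt_colLen.1 hmem
    have hsucc := Nst_succ μ (μ.rowLen i - j1 - 1)
    rw [show μ.rowLen i - j1 - 1 + 1 = μ.rowLen i - j1 by omega] at hsucc
    have hanti : Nst μ (μ.rowLen i - j1 - 1) ≤ Nst μ (μ.rowLen i - j2) := Nst_anti μ (by omega)
    omega
  col_lt := by
    intro i1 i2 j hi hm
    show Nst μ (μ.rowLen i1 - j) + i1 + 1 < Nst μ (μ.rowLen i2 - j) + i2 + 1
    have hj2 : j < μ.rowLen i2 := YoungDiagram.mem_iff_lt_rowLen.1 hm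
    have hrl : μ.rowLen i2 ≤ μ.rowLen i1 := μ.rowLen_anti i1 i2 (le_of_lt hi)
    have hanti : Nst μ (μ.rowLen i1 - j) ≤ Nst μ (μ.rowLen i2 - j) := Nst_anti μ (by omega)
    omega

lemma nondes_maxT (μ : YoungDiagram) {i : ℕ} (h0 : 0 < i) (hlt : i < μ.card)
    (hnd : ¬ (maxT μ).des i) : ∃ j ∈ Finset.Ico 1 μ.card, Nst μ j = i := by
  obtain ⟨p, hp, hpe⟩ := (maxT μ).surjOn i (Finset.mem_Icc.2 ⟨h0, le_of_lt hlt⟩)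
  obtain ⟨a, b⟩ := p
  have hb : b < μ.rowLen a := YoungDiagram.mem_iff_lt_rowLen.1 ((YoungDiagram.mem_cells _).1 hp)
  have hpe' : Nst μ (μ.rowLen a - b) + a + 1 = i := hpe
  have hmem : (a, μ.rowLen a - b - 1) ∈ μ := YoungDiagram.mem_iff_lt_rowLen.2 (by omega)
  have hcol : a < μ.colLen (μ.rowLen a - b - 1) := YoungDiagram.mem_iff_lt_colLen.1 hmem
  have hsucc : Nst μ (μ.rowLen a - b - 1)
      = μ.colLen (μ.rowLen a - b - 1) + Nst μ (μ.rowLen a - b) := by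
    have h := Nst_succ μ (μ.rowLen a - b - 1)
    rwa [show μ.rowLen a - b - 1 + 1 = μ.rowLen a - b by omega] at h
  by_cases hcase : i = Nst μ (μ.rowLen a - b - 1)
  · refine ⟨μ.rowLen a - b - 1, Finset.mem_Ico.2 ⟨?_, ?_⟩, hcase.symm⟩
    · by_contra h
      push_neg at h
      have h1 : μ.rowLen a - b - 1 = 0 := by omega
      rw [h1, Nst_zero] at hcase
      omega
    · have h2 := rowLen_le_card μ a
      omega
  · exfalso
    apply hnd
    have hile : i < Nst μ (μ.rowLen a - b - 1) := by
      have : i ≤ Nst μ (μ.rowLen a - b - 1) := by omega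
      omega
    have hcol2 : a + 1 < μ.colLen (μ.rowLen a - b - 1) := by omega
    have hmem2 : (a + 1, μ.rowLen a - b - 1) ∈ μ := YoungDiagram.mem_iff_lt_colLen.2 hcol2
    have hrow2 : μ.rowLen a - b - 1 < μ.rowLen (a + 1) := YoungDiagram.mem_iff_lt_rowLen.1 hmem2
    have hmem3 : (a + 1, μ.rowLen (a + 1) - (μ.rowLen a - b)) ∈ μ :=
      YoungDiagram.mem_iff_lt_rowLen.2 (by omega)
    refine ⟨(a, b), hp, (a + 1, μ.rowLen (a + 1) - (μ.rowLen a - b)),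
      (YoungDiagram.mem_cells _).2 hmem3, hpe, ?_, by omega⟩
    show Nst μ (μ.rowLen (a + 1) - (μ.rowLen (a + 1) - (μ.rowLen a - b))) + (a + 1) + 1 = i + 1
    rw [show μ.rowLen (a + 1) - (μ.rowLen (a + 1) - (μ.rowLen a - b)) = μ.rowLen a - b by omega]
    omega

lemma sum_le_of_exists {S T : Finset ℕ} {f : ℕ → ℕ} (h : ∀ i ∈ S, ∃ j ∈ T, f j = i) :
    ∑ i ∈ S, i ≤ ∑ j ∈ T, f j := by
  classical
  induction S using Finset.induction_on generalizing T with
  | empty => simp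
  | @insert a s hna ihS =>
    obtain ⟨j, hj, hfj⟩ := h a (Finset.mem_insert_self a s)
    have hrest : ∀ i ∈ s, ∃ j' ∈ T.erase j, f j' = i := by
      intro i hi
      obtain ⟨j', hj', hfj'⟩ := h i (Finset.mem_insert_of_mem hi)
      refine ⟨j', Finset.mem_erase.2 ⟨?_, hj'⟩, hfj'⟩
      rintro rfl
      rw [hfj] at hfj'
      exact hna (hfj' ▸ hi)
    rw [Finset.sum_insert hna]
    calc a + ∑ i ∈ s, i ≤ f j + ∑ j' ∈ T.erase j, f j' := by
          have := ihS hrest; omega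
      _ = ∑ j' ∈ T, f j' := Finset.add_sum_erase T f hj

lemma ndsum_maxT_le (μ : YoungDiagram) : ndsum (maxT μ) ≤ Bsum μ := by
  classical
  rw [ndsum]
  have h1 : ∀ i ∈ Finset.range μ.card,
      (if (maxT μ).des i then 0 else i) = (if ¬ (maxT μ).des i then i else 0) := by
    intro i _
    by_cases h : (maxT μ).des i <;> simp [h]
  rw [Finset.sum_congr rfl h1, ← Finset.sum_filter]
  rw [← Finset.sum_erase (f := fun i => i) (a := 0)
    ((Finset.range μ.card).filter (fun i => ¬ (maxT μ).des i)) rfl]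
  rw [← Nst_sum_eq_Bsum μ]
  apply sum_le_of_exists
  intro i hi
  rw [Finset.mem_erase, Finset.mem_filter, Finset.mem_range] at hi
  exact nondes_maxT μ (by omega) hi.2.1 hi.2.2

end MaxMaj

/-- The maximum of the major index over `SYT(λ)` is `C(n,2) - b(λ')`. -/
theorem max_maj_eq (μ : YoungDiagram) :
    IsGreatest {m : ℕ | ∃ T : SYT μ, T.maj = m}
      (μ.card.choose 2 - bstat μ.transpose) := by
  classical
  have hB := MaxMaj.bstat_transpose_eq_Bsum μ
  have hub : ∀ T : SYT μ, MaxMaj.Bsum μ ≤ MaxMaj.ndsum T := by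
    intro T
    rcases Nat.eq_zero_or_pos μ.card with h0 | hpos
    · have hcells : μ.cells = ∅ := Finset.card_eq_zero.1 h0
      rw [MaxMaj.Bsum, hcells]
      simp
    · obtain ⟨q, hq, hqe⟩ := T.surjOn μ.card (Finset.mem_Icc.2 ⟨hpos, le_refl _⟩)
      have hq' : (q.1, q.2) ∈ μ.cells := by rwa [Prod.mk.eta]
      have hqe' : T.entry (q.1, q.2) = μ.card := by rwa [Prod.mk.eta]
      have := MaxMaj.ub μ.card μ T q.1 q.2 rfl hq' hqe'
      omega
  constructor
  · refine ⟨MaxMaj.maxT μ, ?_⟩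
    have h1 := MaxMaj.maj_add_ndsum (MaxMaj.maxT μ)
    have h2 := MaxMaj.ndsum_maxT_le μ
    have h3 := hub (MaxMaj.maxT μ)
    omega
  · rintro m ⟨T, rfl⟩
    have h1 := MaxMaj.maj_add_ndsum T
    have h3 := hub T
    omega
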